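/- Let M be a positive semidefinite complex d×d matrix, ε ≥ 0, and 0 ≤ η ≤ 1 with d ≥ 2. Then the supremum of tr(M·(ρ − e^ε·σ)) over all pairs of density matrices ρ, σ with D(ρ,σ) ≤ η equals η·λ_max(M) − (e^ε + η − 1)·λ_min(M), and this supremum is attained. -/

import Mathlib

open Matrix BigOperators
open scoped ComplexOrder

namespace QDP

variable {n : Type*} [Fintype n] [DecidableEq n]

/-- Trace distance `D(ρ,σ) = (1/2) tr |ρ - σ|`, where `|A| = sqrt (Aᴴ A)`. -/
noncomputable def traceDist (ρ σ : Matrix n n ℂ) : ℝ :=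
  (1 / 2 : ℝ) * (((Matrix.posSemidef_conjTranspose_mul_self (ρ - σ)).1.eigenvectorUnitary.1 *
    diagonal (((↑) : ℝ → ℂ) ∘ (√·) ∘
      (Matrix.posSemidef_conjTranspose_mul_self (ρ - σ)).1.eigenvalues) *
    (star (Matrix.posSemidef_conjTranspose_mul_self (ρ - σ)).1.eigenvectorUnitary :
      Matrix n n ℂ)).trace).re

/-- A density matrix: positive semidefinite with trace one. -/
def IsDensity (ρ : Matrix n n ℂ) : Prop := ρ.PosSemidef ∧ ρ.trace = 1

/-- The largest eigenvalue of a (Hermitian) matrix. -/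
noncomputable def lamMax (M : Matrix n n ℂ) : ℝ :=
  if h : M.IsHermitian then ⨆ i, h.eigenvalues i else 0

/-- The smallest eigenvalue of a (Hermitian) matrix. -/
noncomputable def lamMin (M : Matrix n n ℂ) : ℝ :=
  if h : M.IsHermitian then ⨅ i, h.eigenvalues i else 0

/-- Application of a quantum channel given by Kraus matrices. -/
noncomputable def applyChan {ι : Type*} [Fintype ι] (E : ι → Matrix n n ℂ)
    (ρ : Matrix n n ℂ) : Matrix n n ℂ := ∑ j, E j * ρ * (E j)ᴴ

/-- The dual of a quantum channel given by Kraus matrices. -/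
noncomputable def dualChan {ι : Type*} [Fintype ι] (E : ι → Matrix n n ℂ)
    (M : Matrix n n ℂ) : Matrix n n ℂ := ∑ j, (E j)ᴴ * M * E j

/-- `(ε,δ)`-differential privacy within `η` of the quantum algorithm `(E, M)`. -/
def IsDP {ι : Type*} [Fintype ι] {O : Type*} [Fintype O]
    (E : ι → Matrix n n ℂ) (M : O → Matrix n n ℂ) (ε δ η : ℝ) : Prop :=
  ∀ ρ σ : Matrix n n ℂ, IsDensity ρ → IsDensity σ → traceDist ρ σ ≤ η →
    ∀ S : Finset O,
      (∑ k ∈ S, (M k * applyChan E ρ).trace).re ≤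
        Real.exp ε * (∑ k ∈ S, (M k * applyChan E σ).trace).re + δ

/-- Rank-one projection `|ψ⟩⟨ψ|`. -/
noncomputable def proj (ψ : n → ℂ) : Matrix n n ℂ := vecMulVec ψ (star ψ)

end QDP

namespace QDPAux

variable {n : Type*} [Fintype n] [DecidableEq n]

noncomputable def cong (U : Matrix.unitaryGroup n ℂ) (f : n → ℝ) : Matrix n n ℂ :=
  (U : Matrix n n ℂ) * Matrix.diagonal (fun i => (f i : ℂ)) * (U : Matrix n n ℂ)ᴴ

lemma U_mul_Uh (U : Matrix.unitaryGroup n ℂ) : (U : Matrix n n ℂ) * (U : Matrix n n ℂ)ᴴ = 1 := by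
  simpa [star_eq_conjTranspose] using mem_unitaryGroup_iff.mp U.2

lemma Uh_mul_U (U : Matrix.unitaryGroup n ℂ) : (U : Matrix n n ℂ)ᴴ * (U : Matrix n n ℂ) = 1 := by
  simpa [star_eq_conjTranspose] using mem_unitaryGroup_iff'.mp U.2

lemma cong_mul (U : Matrix.unitaryGroup n ℂ) (f g : n → ℝ) :
    cong U f * cong U g = cong U (fun i => f i * g i) := by
  simp only [cong, Matrix.mul_assoc]
  rw [← Matrix.mul_assoc ((U : Matrix n n ℂ)ᴴ) (U : Matrix n n ℂ), Uh_mul_U, Matrix.one_mul,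
    ← Matrix.mul_assoc (Matrix.diagonal _) (Matrix.diagonal _), diagonal_mul_diagonal]
  congr 2
  ext i
  simp

lemma cong_add (U : Matrix.unitaryGroup n ℂ) (f g : n → ℝ) :
    cong U f + cong U g = cong U (fun i => f i + g i) := by
  simp only [cong]
  rw [← Matrix.add_mul, ← Matrix.mul_add]
  congr 2
  ext i j
  by_cases hij : i = j <;> simp [Matrix.diagonal_apply, hij]

lemma cong_sub (U : Matrix.unitaryGroup n ℂ) (f g : n → ℝ) :
    cong U f - cong U g = cong U (fun i => f i - g i) := by
  simp only [cong]
  rw [← Matrix.sub_mul, ← Matrix.mul_sub]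
  congr 2
  ext i j
  by_cases hij : i = j <;> simp [Matrix.diagonal_apply, hij]

lemma cong_smul (U : Matrix.unitaryGroup n ℂ) (c : ℝ) (f : n → ℝ) :
    (c : ℂ) • cong U f = cong U (fun i => c * f i) := by
  have h : (Matrix.diagonal fun i => ((c * f i : ℝ) : ℂ))
      = (c : ℂ) • Matrix.diagonal fun i => ((f i : ℝ) : ℂ) := by
    ext i j
    by_cases hij : i = j <;> simp [Matrix.diagonal_apply, hij]
  rw [cong, cong, h, Matrix.mul_smul, Matrix.smul_mul]

lemma cong_one (U : Matrix.unitaryGroup n ℂ) : cong U (fun _ => 1) = 1 := by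
  simp only [cong, Complex.ofReal_one, diagonal_one, Matrix.mul_one]
  exact U_mul_Uh U

lemma cong_const (U : Matrix.unitaryGroup n ℂ) (c : ℝ) :
    cong U (fun _ => c) = (c : ℂ) • 1 := by
  rw [show (fun _ : n => c) = fun _ : n => c * 1 by funext i; ring, ← cong_smul, cong_one]

lemma cong_isHermitian (U : Matrix.unitaryGroup n ℂ) (f : n → ℝ) : (cong U f).IsHermitian := by
  have hd : (Matrix.diagonal fun i => ((f i) : ℂ))ᴴ = Matrix.diagonal fun i => ((f i) : ℂ) := by
    ext i j
    by_cases hij : i = j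
    · simp [Matrix.diagonal_apply, hij, Complex.conj_ofReal]
    · simp only [Matrix.conjTranspose_apply, Matrix.diagonal_apply]
      rw [if_neg hij, if_neg (fun h => hij h.symm)]
      simp
  unfold Matrix.IsHermitian cong
  rw [conjTranspose_mul, conjTranspose_mul, conjTranspose_conjTranspose, hd, Matrix.mul_assoc]

lemma cong_posSemidef (U : Matrix.unitaryGroup n ℂ) {f : n → ℝ} (hf : ∀ i, 0 ≤ f i) :
    (cong U f).PosSemidef := by
  have hd : (Matrix.diagonal (fun i => (f i : ℂ))).PosSemidef := by
    rw [posSemidef_diagonal_iff]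
    intro i
    exact Complex.zero_le_real.mpr (hf i)
  exact hd.mul_mul_conjTranspose_same (U : Matrix n n ℂ)

lemma cong_trace (U : Matrix.unitaryGroup n ℂ) (f : n → ℝ) :
    (cong U f).trace = ((∑ i, f i : ℝ) : ℂ) := by
  rw [cong, Matrix.trace_mul_cycle, Uh_mul_U, Matrix.one_mul, Matrix.trace_diagonal]
  simp

lemma cong_spectral {A : Matrix n n ℂ} (hA : A.IsHermitian) :
    A = cong hA.eigenvectorUnitary hA.eigenvalues := by
  simpa [cong, star_eq_conjTranspose, Function.comp_def] using hA.spectral_theorem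

lemma traceDist_eq {ρ σ : Matrix n n ℂ} (U : Matrix.unitaryGroup n ℂ) (f : n → ℝ)
    (h : ρ - σ = cong U f) : QDP.traceDist ρ σ = (1 / 2 : ℝ) * ∑ i, |f i| := by
  set hh := (Matrix.posSemidef_conjTranspose_mul_self (ρ - σ)).1 with hhdef
  show (1 / 2 : ℝ) * (cong hh.eigenvectorUnitary (fun i => √(hh.eigenvalues i))).trace.re = _
  congr 1
  rw [cong_trace, Complex.ofReal_re]
  obtain ⟨g, hg⟩ : ∃ g : n → ℝ, g = fun i => f i * f i := ⟨_, rfl⟩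
  have hAA : (ρ - σ)ᴴ * (ρ - σ) = cong U g := by
    rw [h, (cong_isHermitian U f).eq, cong_mul, hg]
  have hcp : ((ρ - σ)ᴴ * (ρ - σ)).charpoly.roots
      = Multiset.map (fun i => ((g i : ℝ) : ℂ)) Finset.univ.val := by
    rw [hAA, cong, Matrix.charpoly_mul_comm, ← Matrix.mul_assoc, Uh_mul_U, Matrix.one_mul,
      Matrix.charpoly_diagonal, Polynomial.roots_prod]
    · simp
    · simp [Finset.prod_ne_zero_iff, Polynomial.X_sub_C_ne_zero]
  rw [hh.roots_charpoly_eq_eigenvalues] at hcp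
  have := congrArg (fun m => (m.map (fun z : ℂ => √z.re)).sum) hcp
  simp only [Multiset.map_map, Function.comp_def, Complex.ofReal_re] at this
  change (Multiset.map (fun i => √(hh.eigenvalues i)) Finset.univ.val).sum
    = (Multiset.map (fun x => √(g x)) Finset.univ.val).sum at this
  rw [Finset.sum_eq_multiset_sum, Finset.sum_eq_multiset_sum, this, hg]
  simp only [Real.sqrt_mul_self_eq_abs]

lemma posSemidef_trace_re_nonneg {A : Matrix n n ℂ} (hA : A.PosSemidef) : 0 ≤ A.trace.re := by
  have h : ∀ i, 0 ≤ (A i i).re := by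
    intro i
    exact (Complex.le_def.mp (hA.diag_nonneg (i := i))).1
  have h3 : A.trace.re = ∑ i, (A i i).re := by
    simp [Matrix.trace, Matrix.diag, Complex.re_sum]
  rw [h3]
  exact Finset.sum_nonneg fun i _ => h i

lemma trace_mul_re_nonneg {A B : Matrix n n ℂ} (hA : A.PosSemidef) (hB : B.PosSemidef) :
    0 ≤ (A * B).trace.re := by
  set S := cong hA.1.eigenvectorUnitary (fun i => √(hA.1.eigenvalues i)) with hS
  have hSS : S * S = A := by
    rw [hS, cong_mul]
    conv_rhs => rw [cong_spectral hA.1]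
    congr 1
    funext i
    exact Real.mul_self_sqrt (hA.eigenvalues_nonneg i)
  have h2 : (S * B * S).trace = (A * B).trace := by
    rw [Matrix.trace_mul_cycle, hSS]
  have h3 : (S * B * S).PosSemidef := by
    nth_rewrite 2 [← (show Sᴴ = S from (cong_isHermitian _ _).eq)]
    exact hB.mul_mul_conjTranspose_same S
  rw [← h2]
  exact posSemidef_trace_re_nonneg h3

end QDPAux

set_option maxHeartbeats 1000000 in
open QDP in
/-- The supremum of `tr(M (ρ - e^ε σ))` over pairs of density matrices at trace distance
at most `η` equals `η λ_max(M) - (e^ε + η - 1) λ_min(M)`, and it is attained. -/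
theorem trace_diff_isGreatest {d : ℕ} (hd : 2 ≤ d)
    (M : Matrix (Fin d) (Fin d) ℂ) (hM : M.PosSemidef)
    (ε η : ℝ) (hε : 0 ≤ ε) (hη0 : 0 ≤ η) (hη1 : η ≤ 1) :
    IsGreatest
      {x : ℝ | ∃ ρ σ : Matrix (Fin d) (Fin d) ℂ, IsDensity ρ ∧ IsDensity σ ∧
        traceDist ρ σ ≤ η ∧ x = (M * (ρ - ((Real.exp ε : ℝ) : ℂ) • σ)).trace.re}
      (η * lamMax M - (Real.exp ε + η - 1) * lamMin M) := by
  classical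
  have hd0 : 0 < d := by omega
  haveI : Nonempty (Fin d) := Fin.pos_iff_nonempty.mp hd0
  have hMh : M.IsHermitian := hM.1
  set U := hMh.eigenvectorUnitary with hU
  set lam := hMh.eigenvalues with hlamdef
  have hMc : M = QDPAux.cong U lam := QDPAux.cong_spectral hMh
  have hlamMax : lamMax M = ⨆ i, lam i := by rw [lamMax, dif_pos hMh]
  have hlamMin : lamMin M = ⨅ i, lam i := by rw [lamMin, dif_pos hMh]
  have hle : ∀ i, lam i ≤ lamMax M := fun i => by
    rw [hlamMax]; exact le_ciSup (Set.Finite.bddAbove (Set.finite_range _)) i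
  have hge : ∀ i, lamMin M ≤ lam i := fun i => by
    rw [hlamMin]; exact ciInf_le (Set.Finite.bddBelow (Set.finite_range _)) i
  have hmin0 : 0 ≤ lamMin M := by
    rw [hlamMin]
    exact le_ciInf fun i => hM.eigenvalues_nonneg i
  have hminmax : lamMin M ≤ lamMax M := (hge (Classical.arbitrary _)).trans (hle _)
  have hexp1 : 1 ≤ Real.exp ε := Real.one_le_exp hε
  have key1 : ∀ X : Matrix (Fin d) (Fin d) ℂ, X.PosSemidef →
      (M * X).trace.re ≤ lamMax M * X.trace.re := by
    intro X hX
    have hN : (QDPAux.cong U (fun i => lamMax M - lam i)).PosSemidef :=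
      QDPAux.cong_posSemidef U (fun i => sub_nonneg.mpr (hle i))
    have hsplit : QDPAux.cong U (fun i => lamMax M - lam i) = (lamMax M : ℂ) • 1 - M := by
      rw [← QDPAux.cong_sub, QDPAux.cong_const, ← hMc]
    have h0 := QDPAux.trace_mul_re_nonneg hN hX
    rw [hsplit, Matrix.sub_mul, Matrix.smul_mul, Matrix.one_mul, Matrix.trace_sub,
      Matrix.trace_smul, Complex.sub_re, smul_eq_mul, Complex.re_ofReal_mul] at h0
    linarith
  have key2 : ∀ X : Matrix (Fin d) (Fin d) ℂ, X.PosSemidef →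
      lamMin M * X.trace.re ≤ (M * X).trace.re := by
    intro X hX
    have hN : (QDPAux.cong U (fun i => lam i - lamMin M)).PosSemidef :=
      QDPAux.cong_posSemidef U (fun i => sub_nonneg.mpr (hge i))
    have hsplit : QDPAux.cong U (fun i => lam i - lamMin M) = M - (lamMin M : ℂ) • 1 := by
      rw [← QDPAux.cong_sub, QDPAux.cong_const, ← hMc]
    have h0 := QDPAux.trace_mul_re_nonneg hN hX
    rw [hsplit, Matrix.sub_mul, Matrix.smul_mul, Matrix.one_mul, Matrix.trace_sub,
      Matrix.trace_smul, Complex.sub_re, smul_eq_mul, Complex.re_ofReal_mul] at h0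
    linarith
  constructor
  · -- membership : the value is attained
    obtain ⟨j0, hj0⟩ := exists_eq_ciSup_of_finite (f := lam)
    obtain ⟨j1, hj1⟩ := exists_eq_ciInf_of_finite (f := lam)
    have hex : ∃ i0 i1 : Fin d, i0 ≠ i1 ∧ lam i0 = lamMax M ∧ lam i1 = lamMin M := by
      haveI : Nontrivial (Fin d) := Fin.nontrivial_iff_two_le.mpr hd
      by_cases h01 : j0 = j1
      · obtain ⟨j, hj⟩ := exists_ne j0
        refine ⟨j0, j, fun h => hj h.symm, by rw [hlamMax, hj0], le_antisymm ?_ (hge j)⟩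
        calc lam j ≤ lamMax M := hle j
          _ = lam j0 := by rw [hlamMax, hj0]
          _ = lam j1 := by rw [h01]
          _ = lamMin M := by rw [hlamMin, hj1]
      · exact ⟨j0, j1, h01, by rw [hlamMax, hj0], by rw [hlamMin, hj1]⟩
    obtain ⟨i0, i1, h01, hmax, hmin⟩ := hex
    set fρ : Fin d → ℝ := fun i => (if i = i0 then η else 0) + (if i = i1 then 1 - η else 0)
      with hfρ
    set fσ : Fin d → ℝ := fun i => if i = i1 then 1 else 0 with hfσ
    refine ⟨QDPAux.cong U fρ, QDPAux.cong U fσ, ⟨?_, ?_⟩, ⟨?_, ?_⟩, ?_, ?_⟩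
    · refine QDPAux.cong_posSemidef U (fun i => ?_)
      rw [hfρ]; dsimp only; split_ifs <;> linarith
    · rw [QDPAux.cong_trace]
      have hsum : ∑ i, fρ i = 1 := by
        rw [hfρ]
        dsimp only
        rw [Finset.sum_add_distrib]
        simp [Finset.sum_ite_eq']
      rw [hsum]; norm_num
    · refine QDPAux.cong_posSemidef U (fun i => ?_)
      rw [hfσ]; dsimp only; split_ifs <;> linarith
    · rw [QDPAux.cong_trace]
      have hsum : ∑ i, fσ i = 1 := by
        rw [hfσ]; dsimp only; simp [Finset.sum_ite_eq']
      rw [hsum]; norm_num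
    · -- traceDist ≤ η
      have hdiff : QDPAux.cong U fρ - QDPAux.cong U fσ = QDPAux.cong U (fun i => fρ i - fσ i) :=
        QDPAux.cong_sub U fρ fσ
      rw [QDPAux.traceDist_eq U _ hdiff]
      have habs : ∀ i, |fρ i - fσ i| = (if i = i0 then η else 0) + (if i = i1 then η else 0) := by
        intro i
        rw [hfρ, hfσ]
        dsimp only
        rcases eq_or_ne i i0 with h0 | h0 <;> rcases eq_or_ne i i1 with h1 | h1
        · exact absurd (h0.symm.trans h1) h01
        · simp [h0, h1, h01, abs_of_nonneg hη0]
        · simp only [if_neg h0, if_pos h1]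
          rw [show (0 : ℝ) + (1 - η) - 1 = -η by ring, abs_neg, abs_of_nonneg hη0, zero_add]
        · simp [h0, h1]
      rw [Finset.sum_congr rfl (fun i _ => habs i), Finset.sum_add_distrib]
      simp only [Finset.sum_ite_eq', Finset.mem_univ, if_pos]
      linarith
    · -- the value equality
      have hval : M * (QDPAux.cong U fρ - ((Real.exp ε : ℝ) : ℂ) • QDPAux.cong U fσ)
          = QDPAux.cong U (fun i => lam i * (fρ i - Real.exp ε * fσ i)) := by
        rw [QDPAux.cong_smul, QDPAux.cong_sub, hMc, QDPAux.cong_mul]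
      rw [hval, QDPAux.cong_trace, Complex.ofReal_re]
      have hterm : ∀ i, lam i * (fρ i - Real.exp ε * fσ i)
          = (if i = i0 then lam i * η else 0)
            + (if i = i1 then lam i * (1 - η - Real.exp ε) else 0) := by
        intro i
        rw [hfρ, hfσ]; dsimp only; split_ifs <;> ring
      rw [Finset.sum_congr rfl (fun i _ => hterm i), Finset.sum_add_distrib]
      simp only [Finset.sum_ite_eq', Finset.mem_univ, if_pos]
      rw [hmax, hmin]
      ring
  · -- upper bound
    rintro x ⟨ρ, σ, hρ, hσ, hdist, rfl⟩
    have hA : (ρ - σ).IsHermitian := hρ.1.1.sub hσ.1.1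
    set V := hA.eigenvectorUnitary with hV
    set μ := hA.eigenvalues with hμ
    have hAc : ρ - σ = QDPAux.cong V μ := QDPAux.cong_spectral hA
    set P := QDPAux.cong V (fun i => max (μ i) 0) with hPdef
    set Q := QDPAux.cong V (fun i => max (-μ i) 0) with hQdef
    have hPp : P.PosSemidef := QDPAux.cong_posSemidef V (fun i => le_max_right _ _)
    have hQp : Q.PosSemidef := QDPAux.cong_posSemidef V (fun i => le_max_right _ _)
    have hPQ : P - Q = ρ - σ := by
      have hfun : (fun i => max (μ i) 0 - max (-μ i) 0) = μ :=
        funext fun i => max_zero_sub_max_neg_zero_eq_self (μ i)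
      rw [hPdef, hQdef, QDPAux.cong_sub, hfun, hAc]
    have htrP : P.trace = ((∑ i, max (μ i) 0 : ℝ) : ℂ) := QDPAux.cong_trace _ _
    have htrQ : Q.trace = ((∑ i, max (-μ i) 0 : ℝ) : ℂ) := QDPAux.cong_trace _ _
    set p := ∑ i, max (μ i) 0 with hpdef
    set q := ∑ i, max (-μ i) 0 with hqdef
    have hsumabs : p + q = ∑ i, |μ i| := by
      rw [hpdef, hqdef, ← Finset.sum_add_distrib]
      exact Finset.sum_congr rfl fun i _ => max_zero_add_max_neg_zero_eq_abs_self (μ i)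
    have hdist' : QDP.traceDist ρ σ = (1/2 : ℝ) * ∑ i, |μ i| := QDPAux.traceDist_eq V μ hAc
    have hpq2 : p + q ≤ 2 * η := by
      rw [hsumabs]; rw [hdist'] at hdist; linarith
    have htr0 : ((∑ i, μ i : ℝ) : ℂ) = 0 := by
      rw [← QDPAux.cong_trace V μ, ← hAc, Matrix.trace_sub, hρ.2, hσ.2, sub_self]
    have hsum0 : ∑ i, μ i = 0 := by exact_mod_cast htr0
    have hpq : p - q = 0 := by
      have h2 : p - q = ∑ i, μ i := by
        rw [hpdef, hqdef, ← Finset.sum_sub_distrib]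
        exact Finset.sum_congr rfl fun i _ => max_zero_sub_max_neg_zero_eq_self (μ i)
      rw [h2, hsum0]
    have hqp : q = p := by linarith
    have hpη : p ≤ η := by linarith
    have hdecomp : ρ - ((Real.exp ε : ℝ) : ℂ) • σ = P - Q + σ - ((Real.exp ε : ℝ) : ℂ) • σ := by
      rw [hPQ]; abel
    rw [hdecomp]
    have hexpand : (M * (P - Q + σ - ((Real.exp ε : ℝ) : ℂ) • σ)).trace.re
        = (M * P).trace.re - (M * Q).trace.re + (M * σ).trace.re
          - Real.exp ε * (M * σ).trace.re := by
      rw [Matrix.mul_sub, Matrix.mul_add, Matrix.mul_sub, Matrix.mul_smul,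
        Matrix.trace_sub, Matrix.trace_add, Matrix.trace_sub, Matrix.trace_smul,
        Complex.sub_re, Complex.add_re, Complex.sub_re, smul_eq_mul, Complex.re_ofReal_mul]
    rw [hexpand]
    have hb1 : (M * P).trace.re ≤ lamMax M * p := by
      have h := key1 P hPp; rwa [htrP, Complex.ofReal_re] at h
    have hb2 : lamMin M * p ≤ (M * Q).trace.re := by
      have h := key2 Q hQp; rwa [htrQ, Complex.ofReal_re, hqp] at h
    have hσ1 : σ.trace.re = 1 := by rw [hσ.2, Complex.one_re]
    have hb3 : lamMin M ≤ (M * σ).trace.re := by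
      have h := key2 σ hσ.1; rwa [hσ1, mul_one] at h
    have hmono : p * (lamMax M - lamMin M) ≤ η * (lamMax M - lamMin M) :=
      mul_le_mul_of_nonneg_right hpη (by linarith)
    have hexpσ : (1 - Real.exp ε) * (M * σ).trace.re ≤ (1 - Real.exp ε) * lamMin M :=
      mul_le_mul_of_nonpos_left hb3 (by linarith)
    linarith [hb1, hb2, hmono, hexpσ]
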